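/- With V = (W + c·(tr W)·I_p)⁻¹, one has tr(V² W) ≤ tr(V)/(1 + c p), and hence tr(V² W) ≤ tr(V). -/

import Mathlib

open Matrix
open scoped MatrixOrder

/-- Cauchy–Schwarz for traces of products of real symmetric matrices. -/
lemma trace_mul_sq_le_aux {p : ℕ} (X Y : Matrix (Fin p) (Fin p) ℝ)
    (hX : X.IsHermitian) (hY : Y.IsHermitian) :
    ((X * Y).trace) ^ 2 ≤ (X * X).trace * (Y * Y).trace := by
  have hXa : ∀ i j, X j i = X i j := fun i j => by
    have := hX.apply i j; simpa using this
  have hYa : ∀ i j, Y j i = Y i j := fun i j => by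
    have := hY.apply i j; simpa using this
  have tr_eq : ∀ (A B : Matrix (Fin p) (Fin p) ℝ),
      (A * B).trace = ∑ ij : Fin p × Fin p, A ij.1 ij.2 * B ij.2 ij.1 := by
    intro A B
    rw [Fintype.sum_prod_type]
    simp [Matrix.trace, Matrix.diag, Matrix.mul_apply]
  rw [tr_eq, tr_eq, tr_eq]
  have h1 : ∑ ij : Fin p × Fin p, X ij.1 ij.2 * X ij.2 ij.1
      = ∑ ij : Fin p × Fin p, (X ij.1 ij.2) ^ 2 := by
    refine Finset.sum_congr rfl fun ij _ => ?_
    rw [hXa ij.1 ij.2, sq]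
  have h2 : ∑ ij : Fin p × Fin p, Y ij.1 ij.2 * Y ij.2 ij.1
      = ∑ ij : Fin p × Fin p, (Y ij.1 ij.2) ^ 2 := by
    refine Finset.sum_congr rfl fun ij _ => ?_
    rw [hYa ij.1 ij.2, sq]
  have h3 : ∑ ij : Fin p × Fin p, X ij.1 ij.2 * Y ij.2 ij.1
      = ∑ ij : Fin p × Fin p, X ij.1 ij.2 * Y ij.1 ij.2 := by
    refine Finset.sum_congr rfl fun ij _ => ?_
    rw [hYa ij.1 ij.2]
  rw [h1, h2, h3]
  exact Finset.sum_mul_sq_le_sq_mul_sq Finset.univ _ _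

/-- With `V = (W + c·(tr W)·I_p)⁻¹`, one has `tr(V² W) ≤ tr(V)/(1 + c p)`, and hence
`tr(V² W) ≤ tr(V)`. -/
theorem trace_V2W_bounds (p : ℕ) (hp : 1 ≤ p) (W : Matrix (Fin p) (Fin p) ℝ)
    (hW : W.PosSemidef) (htr : 0 < W.trace) (c : ℝ) (hc : 0 < c)
    (V : Matrix (Fin p) (Fin p) ℝ) (hV : V = (W + (c * W.trace) • 1)⁻¹) :
    (V * V * W).trace ≤ V.trace / (1 + c * p) ∧ (V * V * W).trace ≤ V.trace := by
  set t := W.trace with ht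
  set s := c * t with hs
  have hspos : 0 < s := mul_pos hc htr
  set A := W + s • (1 : Matrix (Fin p) (Fin p) ℝ) with hA
  -- A is positive definite
  have hs1 : ((s : ℝ) • (1 : Matrix (Fin p) (Fin p) ℝ)).PosDef := by
    have : (s : ℝ) • (1 : Matrix (Fin p) (Fin p) ℝ)
        = Matrix.diagonal (fun _ => s) := by
      ext i j
      by_cases h : i = j <;> simp [Matrix.one_apply, Matrix.diagonal, h]
    rw [this]
    exact (Matrix.posDef_diagonal_iff).mpr fun _ => hspos
  have hApd : A.PosDef := Matrix.PosDef.posSemidef_add hW hs1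
  have hAdet : IsUnit A.det := hApd.det_pos.ne'.isUnit
  have hVpd : V.PosDef := hV ▸ hApd.inv
  have hVA : V * A = 1 := by rw [hV]; exact Matrix.nonsing_inv_mul A hAdet
  -- key identity : V * W = 1 - s • V
  have hVW : V * W = 1 - s • V := by
    have : V * A = V * W + s • V := by
      rw [hA, Matrix.mul_add, Matrix.mul_smul, Matrix.mul_one]
    rw [this] at hVA
    exact eq_sub_of_add_eq hVA
  -- trace identity
  have htrace : (V * V * W).trace = V.trace - s * (V * V).trace := by
    rw [Matrix.mul_assoc, hVW, Matrix.mul_sub, Matrix.mul_one, Matrix.mul_smul,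
      Matrix.trace_sub, Matrix.trace_smul]
    simp
  -- Cauchy-Schwarz facts
  set T := V.trace with hT
  set Q := (V * V).trace with hQ
  have hOne : (1 : Matrix (Fin p) (Fin p) ℝ).IsHermitian := Matrix.isHermitian_one
  have cs1 : T ^ 2 ≤ (p : ℝ) * Q := by
    have := trace_mul_sq_le_aux (1 : Matrix (Fin p) (Fin p) ℝ) V hOne hVpd.isHermitian
    simpa [Matrix.trace_one] using this
  -- sqrt trick : p^2 ≤ (tr A) * (tr V)
  have hApsd := hApd.posSemidef
  have hVpsd := hVpd.posSemidef
  set X := CFC.sqrt A with hX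
  have hXpsd : X.PosSemidef := (CFC.sqrt_nonneg A).posSemidef
  have hX2 : X * X = A := CFC.sqrt_mul_sqrt_self A hApsd.nonneg
  have hXdet : IsUnit X.det := by
    have : X.det * X.det = A.det := by rw [← Matrix.det_mul, hX2]
    have hne : X.det ≠ 0 := by
      intro h
      rw [h, mul_zero] at this
      exact hApd.det_pos.ne' this.symm
    exact hne.isUnit
  have hXinv_psd : X⁻¹.PosSemidef := hXpsd.inv
  have hXinv_sq : X⁻¹ * X⁻¹ = V := by
    rw [← Matrix.mul_inv_rev, hX2, hV]
  have hXinvV : X⁻¹ = CFC.sqrt V := by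
    rw [hX, hApsd.inv_sqrt, ← hV]
  have hXV1 : X * CFC.sqrt V = 1 := by
    rw [← hXinvV]
    exact Matrix.mul_nonsing_inv X hXdet
  have cs2 : (p : ℝ) ^ 2 ≤ A.trace * T := by
    have := trace_mul_sq_le_aux X (CFC.sqrt V) hXpsd.isHermitian
      (CFC.sqrt_nonneg V).posSemidef.isHermitian
    rw [hXV1, hX2, CFC.sqrt_mul_sqrt_self V hVpsd.nonneg] at this
    simpa [Matrix.trace_one, hT] using this
  have hAtr : A.trace = t * (1 + c * p) := by
    rw [hA, Matrix.trace_add, Matrix.trace_smul, Matrix.trace_one]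
    simp only [smul_eq_mul, Fintype.card_fin, hs]
    ring
  rw [hAtr] at cs2
  have hppos : (0 : ℝ) < p := by exact_mod_cast Nat.lt_of_lt_of_le Nat.zero_lt_one hp
  have hcp : (0 : ℝ) < 1 + c * p := by positivity
  have hTpos : 0 < T := by nlinarith [mul_pos htr hcp, pow_pos hppos 2]
  have hQnn : 0 ≤ Q := by nlinarith
  -- main inequality
  have key : (V * V * W).trace ≤ T / (1 + c * p) := by
    rw [htrace, le_div_iff₀ hcp]
    -- need (T - s*Q)*(1+cp) ≤ T, i.e. p*T ≤ t*(1+cp)*Q (times c)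
    have hPT : (p : ℝ) * T ≤ t * (1 + c * p) * Q := by
      have h1 : (p : ℝ) ^ 2 * T ≤ t * (1 + c * p) * T * T :=
        mul_le_mul_of_nonneg_right cs2 hTpos.le
      have h2 : t * (1 + c * p) * (T * T) ≤ t * (1 + c * p) * ((p : ℝ) * Q) := by
        apply mul_le_mul_of_nonneg_left _ (by positivity)
        nlinarith
      have h3 : (p : ℝ) * ((p : ℝ) * T) ≤ (p : ℝ) * (t * (1 + c * p) * Q) := by
        nlinarith
      exact le_of_mul_le_mul_left h3 hppos
    have := mul_le_mul_of_nonneg_left hPT hc.le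
    rw [hs]
    nlinarith
  refine ⟨key, key.trans ?_⟩
  exact div_le_self hTpos.le (by nlinarith)
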